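/- Let C be the circle (for instance the unit circle in ℂ, or AddCircle with period 1). Let (B_k)_{k∈ℕ} be a sequence of subsets of C such that: each B_k is closed and countable; B_0 is a singleton; B_k ⊆ B_{k+1} for all k; and every connected component of C \ B_k contains infinitely many points of B_{k+1}. Let 𝓘 be the collection of all subsets of C that arise as a connected component of C \ B_k for some k ∈ ℕ, and let H be the simple graph with vertex set 𝓘 in which two distinct members I, I' are adjacent if and only if one strictly contains the other and there is no I'' ∈ 𝓘 with I ∩ I' ⊊ I'' ⊊ I ∪ I' strictly between them. Then H is a tree (connected and acyclic), and every vertex of H has countably infinite degree (its neighbour set in H is infinite and countable). -/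

import Mathlib

set_option linter.unusedSectionVars false

/-- The collection of all connected components of the complements `C \ B k`,
where `C` is the circle. -/
def circleComponents (B : ℕ → Set (AddCircle (1 : ℝ))) : Set (Set (AddCircle (1 : ℝ))) :=
  {I | ∃ (k : ℕ) (x : AddCircle (1 : ℝ)), x ∉ B k ∧ I = connectedComponentIn (B k)ᶜ x}

/-- The Hasse diagram of the inclusion poset of the components: two distinct
components are adjacent iff one strictly contains the other and no component lies
strictly between them. -/
def hasseGraph (B : ℕ → Set (AddCircle (1 : ℝ))) : SimpleGraph (circleComponents B) :=
  SimpleGraph.fromRel (fun I I' =>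
    ((I : Set (AddCircle (1 : ℝ))) ⊂ I' ∨ (I' : Set (AddCircle (1 : ℝ))) ⊂ I) ∧
      ¬ ∃ I'' ∈ circleComponents B,
          (I : Set (AddCircle (1 : ℝ))) ∩ I' ⊂ I'' ∧
            I'' ⊂ (I : Set (AddCircle (1 : ℝ))) ∪ I')

namespace HasseTreeAux

open Set

local instance : Fact ((0:ℝ) < 1) := ⟨one_pos⟩

abbrev Circ := AddCircle (1 : ℝ)

noncomputable def mk' (t : ℝ) : Circ := (t : Circ)

/-- Level-`k` components. -/
def Comp (B : ℕ → Set Circ) (k : ℕ) : Set (Set Circ) :=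
  {I | ∃ x, x ∉ B k ∧ I = connectedComponentIn (B k)ᶜ x}

section basic

variable {B : ℕ → Set Circ} {k m : ℕ} {I I' J : Set Circ}

lemma comp_nonempty (hI : I ∈ Comp B k) : I.Nonempty := by
  obtain ⟨x, hx, rfl⟩ := hI
  exact ⟨x, mem_connectedComponentIn hx⟩

lemma comp_isPreconnected (hI : I ∈ Comp B k) : IsPreconnected I := by
  obtain ⟨x, hx, rfl⟩ := hI
  exact isPreconnected_connectedComponentIn

lemma comp_subset_compl (hI : I ∈ Comp B k) : I ⊆ (B k)ᶜ := by
  obtain ⟨x, hx, rfl⟩ := hI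
  exact connectedComponentIn_subset _ _

lemma comp_mem_circleComponents (hI : I ∈ Comp B k) : I ∈ circleComponents B := by
  obtain ⟨x, hx, rfl⟩ := hI
  exact ⟨k, x, hx, rfl⟩

lemma mem_comp_of_mem_circleComponents (hI : I ∈ circleComponents B) : ∃ k, I ∈ Comp B k := by
  obtain ⟨k, x, hx, rfl⟩ := hI
  exact ⟨k, x, hx, rfl⟩

/-- A preconnected subset of `(B k)ᶜ` meeting a level-`k` component is contained in it. -/
lemma nest (hI : I ∈ Comp B k) (hs : IsPreconnected J) (hsub : J ⊆ (B k)ᶜ)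
    (hmeet : (J ∩ I).Nonempty) : J ⊆ I := by
  obtain ⟨x, hx, rfl⟩ := hI
  obtain ⟨y, hyJ, hyI⟩ := hmeet
  rw [connectedComponentIn_eq hyI]
  exact hs.subset_connectedComponentIn hyJ hsub

lemma comp_eq_of_inter (hI : I ∈ Comp B k) (hI' : I' ∈ Comp B k)
    (hmeet : (I ∩ I').Nonempty) : I = I' := by
  obtain ⟨y, hy1, hy2⟩ := hmeet
  have h1 : I ⊆ I' := nest hI' (comp_isPreconnected hI) (comp_subset_compl hI) ⟨y, hy1, hy2⟩
  have h2 : I' ⊆ I := nest hI (comp_isPreconnected hI') (comp_subset_compl hI') ⟨y, hy2, hy1⟩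
  exact h1.antisymm h2

lemma bmono (hmono : ∀ k, B k ⊆ B (k + 1)) (hkm : k ≤ m) : B k ⊆ B m := by
  induction m, hkm using Nat.le_induction with
  | base => exact le_rfl
  | succ n hn ih => exact ih.trans (hmono n)

/-- Lower-level component containing a higher-level one. -/
lemma anc (hmono : ∀ k, B k ⊆ B (k + 1)) (hkm : k ≤ m) (hI : I ∈ Comp B m) : ∃ J ∈ Comp B k, I ⊆ J := by
  obtain ⟨x, hx, rfl⟩ := hI
  have hxk : x ∉ B k := fun h => hx (bmono hmono hkm h)
  refine ⟨connectedComponentIn (B k)ᶜ x, ⟨x, hxk, rfl⟩, ?_⟩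
  exact connectedComponentIn_mono x (compl_subset_compl.2 (bmono hmono hkm))

/-- If a lower-level component meets a higher-level component, it contains it. -/
lemma subset_of_meet (hmono : ∀ k, B k ⊆ B (k + 1)) (hkm : k ≤ m) (hI : I ∈ Comp B k) (hI' : I' ∈ Comp B m)
    (hmeet : (I' ∩ I).Nonempty) : I' ⊆ I :=
  nest hI (comp_isPreconnected hI')
    ((comp_subset_compl hI').trans (compl_subset_compl.2 (bmono hmono hkm))) hmeet

lemma infinite_inter_next (hcomp : ∀ k (x : Circ), x ∉ B k →
      (connectedComponentIn (B k)ᶜ x ∩ B (k + 1)).Infinite) (hI : I ∈ Comp B k) : (I ∩ B (k + 1)).Infinite := by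
  obtain ⟨x, hx, rfl⟩ := hI
  exact hcomp k x hx

lemma ssubset_next (hcomp : ∀ k (x : Circ), x ∉ B k →
      (connectedComponentIn (B k)ᶜ x ∩ B (k + 1)).Infinite) (hI : I ∈ Comp B k) (hI' : I' ∈ Comp B (k + 1)) (hsub : I' ⊆ I) :
    I' ⊂ I := by
  refine hsub.ssubset_of_ne ?_
  rintro rfl
  obtain ⟨b, hbI, hb⟩ := (infinite_inter_next hcomp hI).nonempty
  exact (comp_subset_compl hI') hbI hb

lemma level_unique (hmono : ∀ k, B k ⊆ B (k + 1)) (hcomp : ∀ k (x : Circ), x ∉ B k →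
      (connectedComponentIn (B k)ᶜ x ∩ B (k + 1)).Infinite) (hI : I ∈ Comp B k) (hI' : I ∈ Comp B m) : k = m := by
  by_contra hne
  wlog hkm : k < m generalizing k m
  · exact this hI' hI (Ne.symm hne) (by omega)
  obtain ⟨J, hJ, hIJ⟩ := anc hmono (show k + 1 ≤ m by omega) hI'
  obtain ⟨J₀, hJ₀, hJJ₀⟩ := anc hmono (show k ≤ k + 1 by omega) hJ
  have hssub : J ⊂ J₀ := ssubset_next hcomp hJ₀ hJ hJJ₀
  have : I = J₀ := comp_eq_of_inter hI hJ₀ (by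
    obtain ⟨y, hy⟩ := comp_nonempty hI
    exact ⟨y, hy, hJJ₀ (hIJ hy)⟩)
  rw [this] at hIJ
  exact hssub.ne (hssub.subset.antisymm hIJ)

lemma level_lt_of_ssubset (hmono : ∀ k, B k ⊆ B (k + 1)) (hI : I ∈ Comp B k) (hI' : I' ∈ Comp B m) (hss : I' ⊂ I) :
    k < m := by
  by_contra h
  push_neg at h
  obtain ⟨y, hy⟩ := comp_nonempty hI'
  have : I ⊆ I' := subset_of_meet hmono h hI' hI ⟨y, hss.subset hy, hy⟩
  exact hss.not_subset this

end basic


section geometry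

variable {a t s : ℝ}

lemma coe_inj_Ico (ht : t ∈ Ico a (a+1)) (hs : s ∈ Ico a (a+1)) :
    (t : Circ) = (s : Circ) ↔ t = s :=
  AddCircle.coe_eq_coe_iff_of_mem_Ico ht hs

lemma exists_rep_Ico (a : ℝ) (y : Circ) : ∃ t ∈ Ico a (a+1), (t : Circ) = y := by
  refine ⟨((AddCircle.equivIco 1 a) y).1, ((AddCircle.equivIco 1 a) y).2, ?_⟩
  exact (AddCircle.equivIco 1 a).symm_apply_apply y

lemma exists_rep_Ioo (a : ℝ) (y : Circ) (hy : y ≠ (a : Circ)) :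
    ∃ t ∈ Ioo a (a+1), (t : Circ) = y := by
  obtain ⟨t, ht, rfl⟩ := exists_rep_Ico a y
  refine ⟨t, ⟨lt_of_le_of_ne ht.1 ?_, ht.2⟩, rfl⟩
  rintro rfl
  exact hy rfl

lemma coe_ne_of_mem_Ioo (ht : t ∈ Ioo a (a+1)) : (t : Circ) ≠ (a : Circ) := by
  intro h
  have := (coe_inj_Ico (Ioo_subset_Ico_self ht) (left_mem_Ico.2 (by linarith))).1 h
  exact absurd this (ne_of_gt ht.1)

/-- The set of representatives in `Ioo a (a+1)` of a subset of the circle. -/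
def reps (a : ℝ) (J : Set Circ) : Set ℝ := (((↑) : ℝ → Circ) ⁻¹' J) ∩ Ioo a (a+1)

lemma image_reps {J : Set Circ} (hJ : (a : Circ) ∉ J) : ((↑) : ℝ → Circ) '' reps a J = J := by
  apply Subset.antisymm
  · rintro - ⟨t, ht, rfl⟩; exact ht.1
  · intro y hy
    obtain ⟨t, ht, rfl⟩ := exists_rep_Ioo a y (by rintro rfl; exact hJ hy)
    exact ⟨t, ⟨hy, ht⟩, rfl⟩

lemma ordConnected_reps {J : Set Circ} (hJc : IsPreconnected J) (hJ : (a : Circ) ∉ J) :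
    (reps a J).OrdConnected := by
  constructor
  intro p hp q hq r hr
  rcases eq_or_lt_of_le hr.1 with rfl | hpr
  · exact hp
  rcases eq_or_lt_of_le hr.2 with rfl | hrq
  · exact hq
  have hrIoo : r ∈ Ioo a (a+1) := ⟨lt_of_lt_of_le hp.2.1 hr.1, lt_of_le_of_lt hr.2 hq.2.2⟩
  refine ⟨?_, hrIoo⟩
  by_contra hrJ
  -- two open arcs covering `J`
  set U₁ : Set Circ := ((↑) : ℝ → Circ) '' Ioo a r with hU₁
  set U₂ : Set Circ := ((↑) : ℝ → Circ) '' Ioo r (a+1) with hU₂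
  have hopen₁ : IsOpen U₁ := QuotientAddGroup.isOpenMap_coe _ isOpen_Ioo
  have hopen₂ : IsOpen U₂ := QuotientAddGroup.isOpenMap_coe _ isOpen_Ioo
  have hcover : J ⊆ U₁ ∪ U₂ := by
    intro y hy
    obtain ⟨t, ht, rfl⟩ := exists_rep_Ioo a y (by rintro rfl; exact hJ hy)
    rcases lt_trichotomy t r with h | rfl | h
    · exact Or.inl ⟨t, ⟨ht.1, h⟩, rfl⟩
    · exact absurd hy hrJ
    · exact Or.inr ⟨t, ⟨h, ht.2⟩, rfl⟩
  have hdisj : U₁ ∩ U₂ = ∅ := by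
    ext y
    simp only [mem_inter_iff, mem_empty_iff_false, iff_false]
    rintro ⟨⟨t₁, ht₁, rfl⟩, ⟨t₂, ht₂, ht₂'⟩⟩
    have h12 : t₂ = t₁ := (coe_inj_Ico
      (Ioo_subset_Ico_self ⟨hrIoo.1.trans ht₂.1, ht₂.2⟩)
      (Ioo_subset_Ico_self ⟨ht₁.1, ht₁.2.trans hrIoo.2⟩)).1 ht₂'
    exact absurd (h12 ▸ ht₂.1) (not_lt.2 ht₁.2.le)
  have hne₁ : (J ∩ U₁).Nonempty := ⟨(p : Circ), hp.1, ⟨p, ⟨hp.2.1, hpr⟩, rfl⟩⟩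
  have hne₂ : (J ∩ U₂).Nonempty := ⟨(q : Circ), hq.1, ⟨q, ⟨hrq, hq.2.2⟩, rfl⟩⟩
  obtain ⟨z, hz⟩ := hJc U₁ U₂ hopen₁ hopen₂ hcover hne₁ hne₂
  rw [hdisj, inter_empty] at hz
  exact hz

lemma closure_diff_subset_of_ordConnected {T : Set ℝ} (hT : T.OrdConnected)
    (hTne : T.Nonempty) (hbdd : BddAbove T) (hbdd' : BddBelow T) :
    closure T \ T ⊆ {sInf T, sSup T} := by
  rintro x ⟨hxc, hxT⟩
  by_cases h1 : ∃ p ∈ T, p < x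
  · by_cases h2 : ∃ q ∈ T, x < q
    · obtain ⟨p, hp, hpx⟩ := h1
      obtain ⟨q, hq, hxq⟩ := h2
      exact absurd (hT.out hp hq ⟨hpx.le, hxq.le⟩) hxT
    · push_neg at h2
      right
      have hub : ∀ t ∈ T, t ≤ x := fun t ht => le_of_not_gt (fun h => (h2 t ht).not_gt h)
      refine le_antisymm ?_ (csSup_le hTne hub)
      have : closure T ⊆ Iic (sSup T) :=
        closure_minimal (fun t ht => le_csSup hbdd ht) isClosed_Iic
      exact this hxc
  · push_neg at h1
    left
    have hlb : ∀ t ∈ T, x ≤ t := fun t ht => le_of_not_gt (fun h => (h1 t ht).not_gt h)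
    refine le_antisymm (le_csInf hTne hlb) ?_
    have : closure T ⊆ Ici (sInf T) :=
      closure_minimal (fun t ht => csInf_le hbdd' ht) isClosed_Ici
    exact this hxc

/-- The "boundary" of a nonempty preconnected subset of the circle avoiding a point
is finite. -/
lemma closure_diff_finite {J : Set Circ} (a : ℝ) (hJne : J.Nonempty)
    (hJc : IsPreconnected J) (hJ : (a : Circ) ∉ J) : (closure J \ J).Finite := by
  set T := reps a J with hT
  have himg : ((↑) : ℝ → Circ) '' T = J := image_reps hJ
  have hTsub : T ⊆ Ioo a (a+1) := inter_subset_right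
  have hTc : closure T ⊆ Icc a (a+1) := by
    have := closure_mono hTsub
    rwa [closure_Ioo (by linarith : a ≠ a+1)] at this
  have hcomp : IsCompact (closure T) :=
    isCompact_Icc.of_isClosed_subset isClosed_closure hTc
  have hclosed : IsClosed (((↑) : ℝ → Circ) '' closure T) :=
    (hcomp.image QuotientAddGroup.continuous_mk).isClosed
  have hclJ : closure J ⊆ ((↑) : ℝ → Circ) '' closure T := by
    apply closure_minimal _ hclosed
    rw [← himg]
    exact image_mono subset_closure
  have hTne : T.Nonempty := by
    rcases hJne with ⟨y, hy⟩
    rw [← himg] at hy; obtain ⟨t, ht, -⟩ := hy; exact ⟨t, ht⟩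
  have key : closure J \ J ⊆ ((↑) : ℝ → Circ) '' {sInf T, sSup T} := by
    intro y hy
    obtain ⟨t, ht, rfl⟩ := hclJ hy.1
    have htT : t ∉ T := fun h => hy.2 (himg ▸ mem_image_of_mem _ h)
    exact mem_image_of_mem _
      (closure_diff_subset_of_ordConnected (ordConnected_reps hJc hJ) hTne
        ((bddAbove_Ioo).mono hTsub) ((bddBelow_Ioo).mono hTsub) ⟨ht, htT⟩)
  exact (Set.Finite.image _ (by simp [Set.finite_singleton, Set.Finite.insert])).subset key

lemma not_countable_Ioo {c d : ℝ} (h : c < d) : ¬ (Ioo c d).Countable := by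
  intro hc
  have h1 := hc.le_aleph0
  rw [Cardinal.mk_Ioo_real h] at h1
  exact absurd h1 (not_le.mpr Cardinal.aleph0_lt_continuum)

lemma uncountable_image_Ioo {c d : ℝ} (h : c < d) (hsub : Ioo c d ⊆ Ico a (a+1)) :
    ¬ (((↑) : ℝ → Circ) '' Ioo c d).Countable := by
  intro hc
  have hinj : Set.InjOn ((↑) : ℝ → Circ) (Ioo c d) := by
    intro u hu v hv huv
    exact (coe_inj_Ico (hsub hu) (hsub hv)).1 huv
  exact not_countable_Ioo h ((mapsTo_image _ _).countable_of_injOn hinj hc)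

end geometry

section counting

variable {B : ℕ → Set Circ} {k m : ℕ} {I J : Set Circ} {a : ℝ}

lemma exists_subinterval {T : Set ℝ} (hT : T.OrdConnected) {t s ε : ℝ}
    (ht : t ∈ T) (hs : s ∈ T) (hne : s ≠ t) (hε : 0 < ε) :
    ∃ c d : ℝ, c < d ∧ Ioo c d ⊆ T ∧ Ioo c d ⊆ Ioo (t - ε) (t + ε) := by
  rcases hne.lt_or_gt with h | h
  · refine ⟨max s (t - ε), t, by simp [h, hε], ?_, ?_⟩
    · intro r hr
      exact hT.out hs ht ⟨(le_max_left s (t-ε)).trans hr.1.le, hr.2.le⟩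
    · intro r hr
      exact ⟨lt_of_le_of_lt (le_max_right s (t-ε)) hr.1, hr.2.trans (by linarith)⟩
  · refine ⟨t, min s (t + ε), by simp [h, hε], ?_, ?_⟩
    · intro r hr
      exact hT.out ht hs ⟨hr.1.le, hr.2.le.trans (min_le_left _ _)⟩
    · intro r hr
      exact ⟨by linarith [hr.1], lt_of_lt_of_le hr.2 (min_le_right _ _)⟩

lemma comp_infinite (hcomp : ∀ k (x : Circ), x ∉ B k →
      (connectedComponentIn (B k)ᶜ x ∩ B (k + 1)).Infinite) (hI : I ∈ Comp B k) :
    I.Infinite :=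
  Set.Infinite.mono inter_subset_left (infinite_inter_next hcomp hI)

/-- Every point of a component is in the closure of the union of any family of sets
covering the complement of the countable set `B (k+1)` in the component. -/
lemma mem_closure_aux (hcount : ∀ k, (B k).Countable)
    (hcomp : ∀ k (x : Circ), x ∉ B k →
      (connectedComponentIn (B k)ᶜ x ∩ B (k + 1)).Infinite)
    (hI : I ∈ Comp B k) (ha : ((a : ℝ) : Circ) ∉ I) {b : Circ} (hb : b ∈ I) :
    b ∈ closure (I \ B (k+1)) := by
  set T := reps a I with hTdef
  have himg : ((↑) : ℝ → Circ) '' T = I := image_reps ha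
  have hTIoo : T ⊆ Ioo a (a+1) := inter_subset_right
  have hTord : T.OrdConnected := ordConnected_reps (comp_isPreconnected hI) ha
  obtain ⟨t, htIoo, htb⟩ := exists_rep_Ioo a b (by rintro rfl; exact ha hb)
  have htT : t ∈ T := ⟨by rw [mem_preimage, htb]; exact hb, htIoo⟩
  have hTinf : T.Infinite := by
    intro hfin
    exact comp_infinite hcomp hI (by rw [← himg]; exact hfin.image _)
  obtain ⟨s, hsT, hst⟩ : ∃ s ∈ T, s ≠ t := by
    obtain ⟨s, hs⟩ := (hTinf.diff (finite_singleton t)).nonempty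
    exact ⟨s, hs.1, by simpa using hs.2⟩
  rw [mem_closure_iff]
  intro o ho hbo
  have hto : t ∈ ((↑) : ℝ → Circ) ⁻¹' o := by rwa [mem_preimage, htb]
  obtain ⟨ε, hε, hball⟩ := Metric.isOpen_iff.1 (ho.preimage QuotientAddGroup.continuous_mk) t hto
  obtain ⟨c, d, hcd, hsubT, hsubball⟩ := exists_subinterval hTord htT hsT hst hε
  have hIood : Ioo c d ⊆ Metric.ball t ε := by
    intro r hr
    have := hsubball hr
    rw [Real.ball_eq_Ioo]
    exact this
  have himgsub : ((↑) : ℝ → Circ) '' Ioo c d ⊆ o ∩ I := by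
    rintro - ⟨r, hr, rfl⟩
    exact ⟨hball (hIood hr), himg ▸ mem_image_of_mem _ (hsubT hr)⟩
  have huncount : ¬ (((↑) : ℝ → Circ) '' Ioo c d).Countable :=
    uncountable_image_Ioo hcd ((hsubT.trans hTIoo).trans Ioo_subset_Ico_self)
  have : ¬ (((↑) : ℝ → Circ) '' Ioo c d ⊆ B (k+1)) := fun h =>
    huncount ((hcount (k+1)).mono h)
  obtain ⟨y, hy, hyB⟩ := not_subset.1 this
  exact ⟨y, (himgsub hy).1, (himgsub hy).2, hyB⟩

/-- Each component has infinitely many children. -/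
lemma children_infinite (hmono : ∀ k, B k ⊆ B (k + 1)) (hcount : ∀ k, (B k).Countable)
    (hcomp : ∀ k (x : Circ), x ∉ B k →
      (connectedComponentIn (B k)ᶜ x ∩ B (k + 1)).Infinite)
    (ha : ∀ n, ((a : ℝ) : Circ) ∈ B n) (hI : I ∈ Comp B k) :
    {J | J ∈ Comp B (k+1) ∧ J ⊆ I}.Infinite := by
  by_contra hinf
  rw [Set.not_infinite] at hinf
  have hfin := hinf
  set S := {J | J ∈ Comp B (k+1) ∧ J ⊆ I} with hSdef
  have hU : I \ B (k+1) = ⋃ J ∈ S, J := by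
    ext y
    constructor
    · rintro ⟨hyI, hyB⟩
      have hyc : y ∈ connectedComponentIn (B (k+1))ᶜ y := mem_connectedComponentIn hyB
      have hmem : connectedComponentIn (B (k+1))ᶜ y ∈ Comp B (k+1) := ⟨y, hyB, rfl⟩
      have hsub : connectedComponentIn (B (k+1))ᶜ y ⊆ I :=
        subset_of_meet hmono (Nat.le_succ k) hI hmem ⟨y, hyc, hyI⟩
      exact mem_biUnion ⟨hmem, hsub⟩ hyc
    · intro hy
      obtain ⟨J, hJ, hyJ⟩ := mem_iUnion₂.1 hy
      exact ⟨hJ.2 hyJ, fun h => comp_subset_compl hJ.1 hyJ h⟩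
  have hKsub : I ∩ B (k+1) ⊆ ⋃ J ∈ S, (closure J \ J) := by
    rintro b ⟨hbI, hbB⟩
    have hbcl : b ∈ closure (⋃ J ∈ S, J) := by
      rw [← hU]
      exact mem_closure_aux hcount hcomp hI (fun h => (comp_subset_compl hI) h (ha k)) hbI
    rw [hfin.closure_biUnion] at hbcl
    obtain ⟨J, hJ, hbJ⟩ := mem_iUnion₂.1 hbcl
    refine mem_biUnion hJ ⟨hbJ, fun h => comp_subset_compl hJ.1 h hbB⟩
  have hfin2 : (⋃ J ∈ S, (closure J \ J)).Finite := by
    refine hfin.biUnion (fun J hJ => ?_)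
    exact closure_diff_finite a (comp_nonempty hJ.1) (comp_isPreconnected hJ.1)
      (fun h => (comp_subset_compl hJ.1) h (ha (k+1)))
  exact infinite_inter_next hcomp hI (hfin2.subset hKsub)

lemma comp_countable (hcount : ∀ k, (B k).Countable)
    (hcomp : ∀ k (x : Circ), x ∉ B k →
      (connectedComponentIn (B k)ᶜ x ∩ B (k + 1)).Infinite) :
    (Comp B m).Countable := by
  classical
  set f : Set Circ → Circ := fun J =>
    if h : (J ∩ B (m+1)).Nonempty then h.choose else Classical.arbitrary Circ with hf
  have hmaps : MapsTo f (Comp B m) (B (m+1)) := by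
    intro J hJ
    have h : (J ∩ B (m+1)).Nonempty := (infinite_inter_next hcomp hJ).nonempty
    simp only [hf, dif_pos h]
    exact h.choose_spec.2
  have hinj : InjOn f (Comp B m) := by
    intro J hJ J' hJ' hEq
    have h : (J ∩ B (m+1)).Nonempty := (infinite_inter_next hcomp hJ).nonempty
    have h' : (J' ∩ B (m+1)).Nonempty := (infinite_inter_next hcomp hJ').nonempty
    have h1 : f J ∈ J := by simp only [hf, dif_pos h]; exact h.choose_spec.1
    have h2 : f J' ∈ J' := by simp only [hf, dif_pos h']; exact h'.choose_spec.1
    exact comp_eq_of_inter hJ hJ' ⟨f J, h1, hEq ▸ h2⟩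
  exact hmaps.countable_of_injOn hinj (hcount (m+1))

end counting

section root

variable {B : ℕ → Set Circ} {k : ℕ} {I : Set Circ} {a : ℝ}

lemma compl_singleton_eq_image : ({((a : ℝ) : Circ)}ᶜ : Set Circ) = ((↑) : ℝ → Circ) '' Ioo a (a+1) := by
  ext y
  simp only [mem_compl_iff, mem_singleton_iff]
  constructor
  · intro hy
    obtain ⟨t, ht, rfl⟩ := exists_rep_Ioo a y hy
    exact ⟨t, ht, rfl⟩
  · rintro ⟨t, ht, rfl⟩
    exact coe_ne_of_mem_Ioo ht

lemma isPreconnected_compl_singleton :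
    IsPreconnected ({((a : ℝ) : Circ)}ᶜ : Set Circ) := by
  rw [compl_singleton_eq_image]
  exact isPreconnected_Ioo.image _ QuotientAddGroup.continuous_mk.continuousOn

lemma comp_zero_eq (hB0 : B 0 = {((a : ℝ) : Circ)}) (hI : I ∈ Comp B 0) :
    I = ({((a : ℝ) : Circ)}ᶜ : Set Circ) := by
  obtain ⟨x, hx, rfl⟩ := hI
  rw [hB0]
  exact isPreconnected_compl_singleton.connectedComponentIn (by rwa [hB0] at hx)

lemma root_mem_comp_zero (hB0 : B 0 = {((a : ℝ) : Circ)}) :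
    ({((a : ℝ) : Circ)}ᶜ : Set Circ) ∈ Comp B 0 := by
  have hne : ((a + 2⁻¹ : ℝ) : Circ) ≠ ((a : ℝ) : Circ) :=
    coe_ne_of_mem_Ioo (by constructor <;> [linarith; linarith])
  have hx : ((a + 2⁻¹ : ℝ) : Circ) ∉ B 0 := by rw [hB0]; simpa using hne
  refine ⟨((a + 2⁻¹ : ℝ) : Circ), hx, ?_⟩
  rw [hB0]
  exact (isPreconnected_compl_singleton.connectedComponentIn (by simpa using hne)).symm

end root

section graph

variable {B : ℕ → Set Circ} {k m : ℕ} {a : ℝ}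

noncomputable def lvl (B : ℕ → Set Circ) (v : ↥(circleComponents B)) : ℕ :=
  (mem_comp_of_mem_circleComponents v.2).choose

lemma lvl_spec (v : ↥(circleComponents B)) : v.1 ∈ Comp B (lvl B v) :=
  (mem_comp_of_mem_circleComponents v.2).choose_spec

lemma adj_of_parent_child (hmono : ∀ k, B k ⊆ B (k + 1))
    (hcomp : ∀ k (x : Circ), x ∉ B k →
      (connectedComponentIn (B k)ᶜ x ∩ B (k + 1)).Infinite)
    {I J : Set Circ} (hI : I ∈ Comp B k) (hJ : J ∈ Comp B (k+1)) (hsub : J ⊆ I)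
    (hu : I ∈ circleComponents B) (hv : J ∈ circleComponents B) :
    (hasseGraph B).Adj ⟨I, hu⟩ ⟨J, hv⟩ := by
  have hss : J ⊂ I := ssubset_next hcomp hI hJ hsub
  rw [hasseGraph, SimpleGraph.fromRel_adj]
  refine ⟨by simp [Subtype.ext_iff]; exact hss.ne', Or.inl ⟨Or.inr hss, ?_⟩⟩
  rintro ⟨I'', hI'', h1, h2⟩
  rw [inter_eq_self_of_subset_right hsub] at h1
  rw [union_eq_self_of_subset_right hsub] at h2
  obtain ⟨n, hn⟩ := mem_comp_of_mem_circleComponents hI''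
  have hk1 : k < n := level_lt_of_ssubset hmono hI hn h2
  have hk2 : n < k + 1 := level_lt_of_ssubset hmono hn hJ h1
  omega

lemma middle_aux (hmono : ∀ k, B k ⊆ B (k + 1))
    (hcomp : ∀ k (x : Circ), x ∉ B k →
      (connectedComponentIn (B k)ᶜ x ∩ B (k + 1)).Infinite)
    {Iu Iv : Set Circ} (hu : Iu ∈ Comp B k) (hv : Iv ∈ Comp B m) (hss : Iv ⊂ Iu)
    (hno : ¬∃ I'' ∈ circleComponents B, Iv ⊂ I'' ∧ I'' ⊂ Iu) : m = k + 1 := by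
  have hkm : k < m := level_lt_of_ssubset hmono hu hv hss
  by_contra hne
  obtain ⟨J, hJ, hsubJ⟩ := anc hmono (show k + 1 ≤ m by omega) hv
  refine hno ⟨J, comp_mem_circleComponents hJ, ?_, ?_⟩
  · refine hsubJ.ssubset_of_ne ?_
    rintro rfl
    exact hne (level_unique hmono hcomp hv hJ)
  · refine ssubset_next hcomp hu hJ ?_
    obtain ⟨y, hy⟩ := comp_nonempty hv
    exact subset_of_meet hmono (Nat.le_succ k) hu hJ ⟨y, hsubJ hy, hss.subset hy⟩

lemma adj_cases (hmono : ∀ k, B k ⊆ B (k + 1))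
    (hcomp : ∀ k (x : Circ), x ∉ B k →
      (connectedComponentIn (B k)ᶜ x ∩ B (k + 1)).Infinite)
    {u v : ↥(circleComponents B)} (h : (hasseGraph B).Adj u v)
    (hk : u.1 ∈ Comp B k) (hm : v.1 ∈ Comp B m) :
    (v.1 ⊂ u.1 ∧ m = k + 1) ∨ (u.1 ⊂ v.1 ∧ k = m + 1) := by
  rw [hasseGraph, SimpleGraph.fromRel_adj] at h
  obtain ⟨hne, hr⟩ := h
  have hno : ¬∃ I'' ∈ circleComponents B, u.1 ∩ v.1 ⊂ I'' ∧ I'' ⊂ u.1 ∪ v.1 := by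
    rcases hr with ⟨-, h2⟩ | ⟨-, h2⟩
    · exact h2
    · rintro ⟨I'', hI'', ha1, ha2⟩
      exact h2 ⟨I'', hI'', by rwa [inter_comm], by rwa [union_comm]⟩
  have hss : u.1 ⊂ v.1 ∨ v.1 ⊂ u.1 := by
    rcases hr with ⟨h1, -⟩ | ⟨h1, -⟩
    · exact h1
    · exact h1.symm
  rcases hss with hss | hss
  · refine Or.inr ⟨hss, middle_aux hmono hcomp hm hk hss ?_⟩
    rw [inter_eq_self_of_subset_left hss.subset, union_eq_self_of_subset_left hss.subset] at hno
    exact hno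
  · refine Or.inl ⟨hss, middle_aux hmono hcomp hk hm hss ?_⟩
    rw [inter_eq_self_of_subset_right hss.subset, union_eq_self_of_subset_right hss.subset] at hno
    exact hno

lemma reachable_root (hmono : ∀ k, B k ⊆ B (k + 1))
    (hcomp : ∀ k (x : Circ), x ∉ B k →
      (connectedComponentIn (B k)ᶜ x ∩ B (k + 1)).Infinite)
    (hB0 : B 0 = {((a : ℝ) : Circ)}) :
    ∀ k (v : ↥(circleComponents B)), v.1 ∈ Comp B k →
      (hasseGraph B).Reachable v
        ⟨({((a : ℝ) : Circ)}ᶜ : Set Circ),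
          comp_mem_circleComponents (root_mem_comp_zero hB0)⟩ := by
  intro k
  induction k with
  | zero =>
    intro v hv
    have : v = ⟨({((a : ℝ) : Circ)}ᶜ : Set Circ),
        comp_mem_circleComponents (root_mem_comp_zero hB0)⟩ :=
      Subtype.ext (comp_zero_eq hB0 hv)
    rw [this]
  | succ n ih =>
    intro v hv
    obtain ⟨J, hJ, hsub⟩ := anc hmono (Nat.le_succ n) hv
    have hadj : (hasseGraph B).Adj ⟨J, comp_mem_circleComponents hJ⟩ ⟨v.1, v.2⟩ :=
      adj_of_parent_child hmono hcomp hJ hv hsub _ _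
    exact (SimpleGraph.Adj.reachable hadj.symm).trans (ih ⟨J, comp_mem_circleComponents hJ⟩ hJ)

lemma cycle_exists_two_neighbors {V' : Type*} {G : SimpleGraph V'} {w : V'} {c : G.Walk w w}
    (hc : c.IsCycle) :
    ∃ x y, x ≠ y ∧ G.Adj w x ∧ G.Adj w y ∧ x ∈ c.support ∧ y ∈ c.support := by
  cases c with
  | nil => exact absurd hc.three_le_length (by simp)
  | @cons _ x _ h q =>
    have hlen : 2 ≤ q.length := by
      have := hc.three_le_length
      simp only [SimpleGraph.Walk.length_cons] at this
      omega
    have hq : ¬ q.reverse.Nil := by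
      rw [SimpleGraph.Walk.not_nil_iff_lt_length, SimpleGraph.Walk.length_reverse]
      omega
    obtain ⟨y, hwy, q₂, hq2⟩ := SimpleGraph.Walk.not_nil_iff.1 hq
    have hedge : s(w, y) ∈ q.edges := by
      have h1 : s(w, y) ∈ q.reverse.edges := by
        rw [hq2, SimpleGraph.Walk.edges_cons]
        exact List.mem_cons_self
      rwa [SimpleGraph.Walk.edges_reverse, List.mem_reverse] at h1
    have hnodup := hc.edges_nodup
    rw [SimpleGraph.Walk.edges_cons] at hnodup
    have hnotin : s(w, x) ∉ q.edges := (List.nodup_cons.1 hnodup).1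
    refine ⟨x, y, ?_, h, hwy, ?_, ?_⟩
    · rintro rfl; exact hnotin hedge
    · rw [SimpleGraph.Walk.support_cons]
      exact List.mem_cons_of_mem _ q.start_mem_support
    · have hy : y ∈ q.reverse.support := by
        rw [hq2, SimpleGraph.Walk.support_cons]
        exact List.mem_cons_of_mem _ q₂.start_mem_support
      rw [SimpleGraph.Walk.support_reverse, List.mem_reverse] at hy
      rw [SimpleGraph.Walk.support_cons]
      exact List.mem_cons_of_mem _ hy

lemma hasse_acyclic (hmono : ∀ k, B k ⊆ B (k + 1))
    (hcomp : ∀ k (x : Circ), x ∉ B k →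
      (connectedComponentIn (B k)ᶜ x ∩ B (k + 1)).Infinite) :
    (hasseGraph B).IsAcyclic := by
  classical
  intro v c hc
  obtain ⟨w, hw⟩ : ∃ w, w ∈ List.argmax (lvl B) c.support := by
    cases hargm : List.argmax (lvl B) c.support with
    | none =>
      rw [List.argmax_eq_none] at hargm
      exact absurd hargm c.support_ne_nil
    | some w => exact ⟨w, rfl⟩
  have hwsup : w ∈ c.support := List.argmax_mem hw
  have hmax : ∀ z ∈ c.support, lvl B z ≤ lvl B w := fun z hz => List.le_of_mem_argmax hz hw
  have hc' := hc.rotate hwsup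
  have hsupp : ∀ z, z ∈ (c.rotate w hwsup).support → z ∈ c.support := by
    intro z hz
    have hperm := SimpleGraph.Walk.support_rotate c w hwsup
    rcases (SimpleGraph.Walk.mem_support_iff _).1 hz with rfl | hz'
    · exact hwsup
    · exact List.mem_of_mem_tail (hperm.mem_iff.1 hz')
  obtain ⟨x, y, hxy, hax, hay, hxs, hys⟩ := cycle_exists_two_neighbors hc'
  have hlx : lvl B x ≤ lvl B w := hmax x (hsupp x hxs)
  have hly : lvl B y ≤ lvl B w := hmax y (hsupp y hys)
  have hcx : w.1 ⊂ x.1 ∧ lvl B w = lvl B x + 1 := by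
    rcases adj_cases hmono hcomp hax (lvl_spec w) (lvl_spec x) with ⟨h1, h2⟩ | ⟨h1, h2⟩
    · omega
    · exact ⟨h1, h2⟩
  have hcy : w.1 ⊂ y.1 ∧ lvl B w = lvl B y + 1 := by
    rcases adj_cases hmono hcomp hay (lvl_spec w) (lvl_spec y) with ⟨h1, h2⟩ | ⟨h1, h2⟩
    · omega
    · exact ⟨h1, h2⟩
  have hxeqy : x.1 = y.1 := by
    have hyx : lvl B y = lvl B x := by omega
    have hy' : y.1 ∈ Comp B (lvl B x) := hyx ▸ lvl_spec y
    obtain ⟨z, hz⟩ := comp_nonempty (lvl_spec w)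
    exact comp_eq_of_inter (lvl_spec x) hy' ⟨z, hcx.1.subset hz, hcy.1.subset hz⟩
  exact hxy (Subtype.ext hxeqy)

end graph

section degree

variable {B : ℕ → Set Circ} {a : ℝ}

lemma degree_infinite (hmono : ∀ k, B k ⊆ B (k + 1)) (hcount : ∀ k, (B k).Countable)
    (hcomp : ∀ k (x : Circ), x ∉ B k →
      (connectedComponentIn (B k)ᶜ x ∩ B (k + 1)).Infinite)
    (ha : ∀ n, ((a : ℝ) : Circ) ∈ B n) (v : ↥(circleComponents B)) :
    ((hasseGraph B).neighborSet v).Infinite := by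
  have hk := lvl_spec v
  have hSinf := children_infinite hmono hcount hcomp ha hk
  rw [← Set.infinite_coe_iff] at hSinf ⊢
  refine @Infinite.of_injective _ _ hSinf
    (fun J => ⟨⟨J.1, comp_mem_circleComponents J.2.1⟩, ?_⟩) ?_
  · show (hasseGraph B).Adj v _
    have := adj_of_parent_child hmono hcomp hk J.2.1 J.2.2 v.2
      (comp_mem_circleComponents J.2.1)
    exact this
  · intro J J' h
    apply Subtype.ext
    simpa [Subtype.ext_iff] using h

lemma degree_countable (hmono : ∀ k, B k ⊆ B (k + 1)) (hcount : ∀ k, (B k).Countable)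
    (hcomp : ∀ k (x : Circ), x ∉ B k →
      (connectedComponentIn (B k)ᶜ x ∩ B (k + 1)).Infinite)
    (v : ↥(circleComponents B)) :
    ((hasseGraph B).neighborSet v).Countable := by
  have hk := lvl_spec v
  set k := lvl B v
  have hsub : (hasseGraph B).neighborSet v ⊆
      {u : ↥(circleComponents B) | u.1 ∈ Comp B (k+1)} ∪
        {u : ↥(circleComponents B) | u.1 ∈ Comp B (k-1)} := by
    intro u hu
    rcases adj_cases hmono hcomp hu hk (lvl_spec u) with ⟨-, h2⟩ | ⟨-, h2⟩
    · left; exact h2 ▸ lvl_spec u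
    · right
      have : lvl B u = k - 1 := by omega
      exact this ▸ lvl_spec u
  refine Set.Countable.mono hsub (Set.Countable.union ?_ ?_)
  · exact (comp_countable hcount hcomp).preimage Subtype.val_injective
  · exact (comp_countable hcount hcomp).preimage Subtype.val_injective

end degree

end HasseTreeAux

theorem hasse_diagram_is_countably_infinite_valent_tree
    (B : ℕ → Set (AddCircle (1 : ℝ)))
    (hclosed : ∀ k, IsClosed (B k))
    (hcount : ∀ k, (B k).Countable)
    (hB0 : ∃ x, B 0 = {x})
    (hmono : ∀ k, B k ⊆ B (k + 1))
    (hcomp : ∀ k (x : AddCircle (1 : ℝ)), x ∉ B k →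
      (connectedComponentIn (B k)ᶜ x ∩ B (k + 1)).Infinite) :
    (hasseGraph B).IsTree ∧
      ∀ v, ((hasseGraph B).neighborSet v).Infinite ∧
        ((hasseGraph B).neighborSet v).Countable := by
  classical
  obtain ⟨x0, hx0⟩ := hB0
  obtain ⟨a, haIco, hax⟩ := HasseTreeAux.exists_rep_Ico 0 x0
  have hB0' : B 0 = {((a : ℝ) : AddCircle (1:ℝ))} := by rw [hx0, hax]
  have haB : ∀ n, ((a : ℝ) : AddCircle (1:ℝ)) ∈ B n := by
    intro n
    exact HasseTreeAux.bmono hmono (Nat.zero_le n) (by rw [hB0']; exact Set.mem_singleton _)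
  have hconn : (hasseGraph B).Connected := by
    rw [SimpleGraph.connected_iff]
    constructor
    · intro u v
      exact (HasseTreeAux.reachable_root hmono hcomp hB0' _ u (HasseTreeAux.lvl_spec u)).trans
        (HasseTreeAux.reachable_root hmono hcomp hB0' _ v (HasseTreeAux.lvl_spec v)).symm
    · exact ⟨⟨_, HasseTreeAux.comp_mem_circleComponents
        (HasseTreeAux.root_mem_comp_zero hB0')⟩⟩
  refine ⟨⟨hconn, HasseTreeAux.hasse_acyclic hmono hcomp⟩, fun v => ?_⟩
  exact ⟨HasseTreeAux.degree_infinite hmono hcount hcomp haB v,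
    HasseTreeAux.degree_countable hmono hcount hcomp v⟩
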